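/- Let $q, n$ be coprime, $n > 1$, $0 < r < q$, and work on the curve $y^q = \prod_{a=1}^n (x - z_a)$ over a field $k$ containing distinct $z_1, \dots, z_n$, with $\gcd(nq, \mathrm{char}\,k)=1$. For $1 \le k_0, j$ with $j \le \lfloor n(q-r)/q \rfloor$, the residue at the point $D_{k_0}$ over $z_{k_0}$ of the meromorphic differential $\frac{-q}{r y^r} \cdot \frac{x^{j-1} dx}{y^{q-r}}$ equals $\frac{-q}{r\, C_{k_0}(z)} z_{k_0}^{j-1}$, where $C_{k_0}(z) = \prod_{i \ne k_0} (z_{k_0} - z_i)$. -/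

import Mathlib

open Polynomial

/-- Residue of `C A / X` : the coefficient of `X⁻¹` in its Laurent expansion is `A`. -/
lemma res_CA_div_X {K : Type*} [Field K] (A : K) :
    ((RatFunc.C A / RatFunc.X : RatFunc K) : LaurentSeries K).coeff (-1) = A := by
  have hCA : ((RatFunc.C A : RatFunc K) : LaurentSeries K) = HahnSeries.C A := by
    have h := RatFunc.coe_coe (Polynomial.C A)
    rw [Polynomial.coe_C, PowerSeries.coe_C] at h
    rw [← RatFunc.algebraMap_C]
    exact h.symm
  rw [map_div₀, hCA, RatFunc.coe_X, div_eq_mul_inv,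
    HahnSeries.inv_single (1 : ℤ) (1 : K), inv_one]
  rw [show (HahnSeries.C A : LaurentSeries K) = HahnSeries.single (0 : ℤ) A from rfl,
    HahnSeries.single_mul_single]
  simp

/-- If the denominator does not vanish at `0`, the rational function is regular at `0`,
so the coefficient of `X⁻¹` in its Laurent expansion vanishes. -/
lemma res_regular {K : Type*} [Field K] (P G : K[X]) (hG : G.coeff 0 ≠ 0) :
    ((algebraMap K[X] (RatFunc K) P / algebraMap K[X] (RatFunc K) G : RatFunc K) :
      LaurentSeries K).coeff (-1) = 0 := by
  have hGu : IsUnit (G : PowerSeries K) := by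
    rw [PowerSeries.isUnit_iff_constantCoeff, Polynomial.constantCoeff_coe]
    exact hG.isUnit
  obtain ⟨u, hu⟩ := hGu
  have hP : ((algebraMap K[X] (RatFunc K) P : RatFunc K) : LaurentSeries K)
      = (((P : PowerSeries K) : LaurentSeries K)) := (RatFunc.coe_coe P).symm
  have hGc : ((algebraMap K[X] (RatFunc K) G : RatFunc K) : LaurentSeries K)
      = (((G : PowerSeries K) : LaurentSeries K)) := (RatFunc.coe_coe G).symm
  have hGne : (((G : PowerSeries K) : LaurentSeries K)) ≠ 0 := by
    rw [← hu]
    exact (u.isUnit.map (HahnSeries.ofPowerSeries ℤ K)).ne_zero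
  have key : ((algebraMap K[X] (RatFunc K) P / algebraMap K[X] (RatFunc K) G : RatFunc K) :
      LaurentSeries K) = (((P : PowerSeries K) * ↑u⁻¹ : PowerSeries K) : LaurentSeries K) := by
    rw [map_div₀, hP, hGc, div_eq_iff hGne, ← hu, ← PowerSeries.coe_mul,
      Units.inv_mul_cancel_right]
  rw [key, PowerSeries.coeff_coe, if_pos (by norm_num)]

/-- The residue at the point over `z_{k₀}` of the differential
`(-q/(r y^r))·(x^{j-1} dx / y^{q-r})`, which on the curve `y^q = ∏_a (x - z_a)`
equals `(-q/r)·x^{j-1} dx / ∏_a (x - z_a)`, is `(-q/(r C_{k₀}(z)))·z_{k₀}^{j-1}`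
with `C_{k₀}(z) = ∏_{i ≠ k₀} (z_{k₀} - z i)`.  The residue is computed as the
coefficient of `X⁻¹` in the Laurent expansion about `z_{k₀}`. -/
theorem stmt_17 (K : Type*) [Field K] (q n r j : ℕ) (hq : 0 < q) (hn : 1 < n)
    (hcop : Nat.Coprime q n) (hr0 : 0 < r) (hrq : r < q)
    (hj1 : 1 ≤ j) (hj2 : j ≤ n * (q - r) / q)
    (hqK : (q : K) ≠ 0) (hnK : (n : K) ≠ 0) (hrK : (r : K) ≠ 0)
    (z : Fin n → K) (hz : Function.Injective z) (k0 : Fin n) :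
    ((RatFunc.laurent (z k0)
        (RatFunc.C (-(q : K) / (r : K)) * RatFunc.X ^ (j - 1) /
          ∏ a : Fin n, (RatFunc.X - RatFunc.C (z a))) : RatFunc K) :
      LaurentSeries K).coeff (-1)
      = (-(q : K) / ((r : K) * ∏ i ∈ Finset.univ.erase k0, (z k0 - z i))) *
          z k0 ^ (j - 1) := by
  set t := z k0 with ht
  set c : K := -(q : K) / (r : K) with hc
  set g0 : K := ∏ i ∈ Finset.univ.erase k0, (t - z i) with hg0def
  have hg0 : g0 ≠ 0 := by
    rw [hg0def]
    refine Finset.prod_ne_zero_iff.mpr fun i hi => sub_ne_zero.mpr fun h => ?_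
    exact (Finset.mem_erase.mp hi).1 (hz h.symm)
  set A : K := c * t ^ (j - 1) / g0 with hA
  set φ := algebraMap K[X] (RatFunc K) with hφ
  -- polynomial data
  set Gp : K[X] := ∏ a ∈ Finset.univ.erase k0, (Polynomial.X + Polynomial.C (t - z a))
    with hGpdef
  set Np : K[X] := Polynomial.C c * (Polynomial.X + Polynomial.C t) ^ (j - 1) with hNpdef
  have hGp0 : Gp.coeff 0 = g0 := by
    rw [hGpdef, Polynomial.coeff_zero_eq_eval_zero, Polynomial.eval_prod, hg0def]
    simp
  have hNp0 : Np.coeff 0 = c * t ^ (j - 1) := by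
    rw [hNpdef, Polynomial.coeff_zero_eq_eval_zero]
    simp
  have hXdvd : Polynomial.X ∣ Np - Polynomial.C A * Gp := by
    rw [Polynomial.X_dvd_iff, Polynomial.coeff_sub, hNp0, Polynomial.coeff_C_mul, hGp0, hA]
    field_simp
    ring
  obtain ⟨Pp, hPp⟩ := hXdvd
  have hNeq : Np = Polynomial.C A * Gp + Polynomial.X * Pp := by
    rw [← hPp]; ring
  -- nonvanishing
  have hGpne : Gp ≠ 0 := fun h => hg0 (by rw [← hGp0, h, Polynomial.coeff_zero])
  have hGne : φ Gp ≠ 0 := by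
    simpa [hφ] using (RatFunc.algebraMap_ne_zero hGpne)
  have hXne : (RatFunc.X : RatFunc K) ≠ 0 := RatFunc.X_ne_zero
  -- the laurent expansion
  have hlaurent : RatFunc.laurent t
      (RatFunc.C c * RatFunc.X ^ (j - 1) / ∏ a : Fin n, (RatFunc.X - RatFunc.C (z a)))
      = RatFunc.C c * (RatFunc.X + RatFunc.C t) ^ (j - 1) /
          ∏ a : Fin n, (RatFunc.X + RatFunc.C (t - z a)) := by
    rw [map_div₀, map_mul, map_pow, RatFunc.laurent_X, RatFunc.laurent_C, map_prod]
    congr 1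
    refine Finset.prod_congr rfl fun a _ => ?_
    rw [map_sub, RatFunc.laurent_X, RatFunc.laurent_C, map_sub]
    ring
  -- denominator factorization
  have hprod : (∏ a : Fin n, (RatFunc.X + RatFunc.C (t - z a))) = RatFunc.X * φ Gp := by
    rw [← Finset.mul_prod_erase _ _ (Finset.mem_univ k0)]
    congr 1
    · rw [← ht, sub_self, map_zero, add_zero]
    · rw [hGpdef, map_prod]
      exact Finset.prod_congr rfl fun a _ => by
        rw [map_add, RatFunc.algebraMap_X, RatFunc.algebraMap_C]
  have hnum : RatFunc.C c * (RatFunc.X + RatFunc.C t) ^ (j - 1) = φ Np := by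
    rw [hNpdef, map_mul, map_pow, map_add, RatFunc.algebraMap_X, RatFunc.algebraMap_C,
      RatFunc.algebraMap_C]
  -- partial fraction decomposition
  have hsplit : RatFunc.C c * (RatFunc.X + RatFunc.C t) ^ (j - 1) /
      ∏ a : Fin n, (RatFunc.X + RatFunc.C (t - z a))
      = RatFunc.C A / RatFunc.X + φ Pp / φ Gp := by
    rw [hprod, hnum, div_add_div _ _ hXne hGne, hNeq]
    rw [hφ, map_add, map_mul, map_mul, RatFunc.algebraMap_C, RatFunc.algebraMap_X]
  rw [hlaurent, hsplit, map_add, HahnSeries.coeff_add, res_CA_div_X,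
    res_regular Pp Gp (by rw [hGp0]; exact hg0), add_zero, hA, hc]
  field_simp
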